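/- Let r be a real number with r > 0, let θ be a real number, and let α, β be complex numbers with |α|² + |β|² = 1. Then there do not exist functions f, f' : ℂ → ℂ such that for all γ, γ' ∈ ℂ one has Complex.exp ( (Real.tanh r)² · ((conj α)·(conj γ) + (conj β)·(conj γ'))² · (exp(−i·θ))² · ((−β)·(conj γ) + α·(conj γ'))² ) = f γ · f' γ'. -/

import Mathlib

open Complex

/-- Auxiliary: the joint amplitude exponent. -/
noncomputable def Eamp (r θ : ℝ) (α β : ℂ) (γ γ' : ℂ) : ℂ :=
  ((Real.tanh r : ℂ)) ^ 2 *
    ((starRingEnd ℂ α) * (starRingEnd ℂ γ) + (starRingEnd ℂ β) * (starRingEnd ℂ γ')) ^ 2 *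
    (Complex.exp (-(Complex.I * θ))) ^ 2 *
    ((-β) * (starRingEnd ℂ γ) + α * (starRingEnd ℂ γ')) ^ 2

theorem sTMSV_amplitude_not_factorizable (r : ℝ) (hr : 0 < r) (θ : ℝ) (α β : ℂ)
    (h : ‖α‖ ^ 2 + ‖β‖ ^ 2 = 1) :
    ¬ ∃ f f' : ℂ → ℂ, ∀ γ γ' : ℂ,
      Complex.exp (((Real.tanh r : ℂ)) ^ 2 *
          ((starRingEnd ℂ α) * (starRingEnd ℂ γ) + (starRingEnd ℂ β) * (starRingEnd ℂ γ')) ^ 2 *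
          (Complex.exp (-(Complex.I * θ))) ^ 2 *
          ((-β) * (starRingEnd ℂ γ) + α * (starRingEnd ℂ γ')) ^ 2) = f γ * f' γ' := by
  rintro ⟨f, f', hf⟩
  have hf' : ∀ γ γ' : ℂ, Complex.exp (Eamp r θ α β γ γ') = f γ * f' γ' := hf
  set E := Eamp r θ α β with hE
  -- tanh r ≠ 0
  have htanh : Real.tanh r ≠ 0 := by
    have : 0 < Real.tanh r := by
      rw [Real.tanh_eq_sinh_div_cosh]
      exact div_pos (by rwa [Real.sinh_pos_iff]) (Real.cosh_pos r)
    exact ne_of_gt this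
  set c : ℂ := ((Real.tanh r : ℂ)) ^ 2 * (Complex.exp (-(Complex.I * θ))) ^ 2 with hcdef
  have hc : c ≠ 0 := mul_ne_zero (pow_ne_zero _ (by exact_mod_cast htanh))
    (pow_ne_zero _ (Complex.exp_ne_zero _))
  -- E 0 0 = 0
  have h00 : E 0 0 = 0 := by simp [hE, Eamp]
  -- key factorization consequence
  have key : ∀ γ γ' : ℂ, Complex.exp (E γ γ' - E γ 0 - E 0 γ') = 1 := by
    intro γ γ'
    have h4 := hf' 0 0
    rw [h00, Complex.exp_zero] at h4
    have hX : Complex.exp (E γ 0) * Complex.exp (E 0 γ') ≠ 0 :=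
      mul_ne_zero (Complex.exp_ne_zero _) (Complex.exp_ne_zero _)
    have hcalc : Complex.exp (E γ γ' - E γ 0 - E 0 γ') *
        (Complex.exp (E γ 0) * Complex.exp (E 0 γ')) =
        1 * (Complex.exp (E γ 0) * Complex.exp (E 0 γ')) := by
      have harg : E γ γ' - E γ 0 - E 0 γ' + (E γ 0 + E 0 γ') = E γ γ' := by ring
      rw [← Complex.exp_add, ← Complex.exp_add, harg, hf' γ γ', Complex.exp_add,
        hf' γ 0, hf' 0 γ']
      linear_combination (f γ * f' γ') * h4
    exact mul_right_cancel₀ hX hcalc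
  -- scaling
  have hscale : ∀ (s : ℝ) (g g' : ℂ), E ((s : ℂ) * g) ((s : ℂ) * g') = (s : ℂ) ^ 4 * E g g' := by
    intro s g g'
    simp only [hE, Eamp, map_mul, Complex.conj_ofReal]
    ring
  -- nonvanishing of the cross term for some point
  have hQ : ∃ g g' : ℂ, E g g' - E g 0 - E 0 g' ≠ 0 := by
    by_contra hcon
    push_neg at hcon
    have q1 := hcon 1 1
    have q2 := hcon 1 (-1)
    have q3 := hcon 1 (-Complex.I)
    simp only [hE, Eamp, map_one, map_zero, map_neg, Complex.conj_I, neg_neg, mul_zero,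
      mul_one, zero_mul, add_zero, zero_add, mul_neg, neg_mul] at q1 q2 q3
    set a := starRingEnd ℂ α with ha
    set b := starRingEnd ℂ β with hb
    -- cast the normalization
    have hC : a * α + b * β = 1 := by
      have h1 : α * a = ((‖α‖ : ℂ)) ^ 2 := by
        rw [ha, Complex.mul_conj]
        norm_cast
        exact (Complex.sq_norm α).symm
      have h2 : β * b = ((‖β‖ : ℂ)) ^ 2 := by
        rw [hb, Complex.mul_conj]
        norm_cast
        exact (Complex.sq_norm β).symm
      have := congrArg (fun x : ℝ => (x : ℂ)) h
      push_cast at this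
      linear_combination h1 + h2 + this
    have Q1 : (a + b) ^ 2 * (α - β) ^ 2 - a ^ 2 * β ^ 2 - b ^ 2 * α ^ 2 = 0 := by
      apply mul_left_cancel₀ hc
      rw [mul_zero, hcdef]
      linear_combination q1
    have Q2 : (a - b) ^ 2 * (-β - α) ^ 2 - a ^ 2 * β ^ 2 - b ^ 2 * α ^ 2 = 0 := by
      apply mul_left_cancel₀ hc
      rw [mul_zero, hcdef]
      linear_combination q2
    have Q3 : (a + Complex.I * b) ^ 2 * (-β + Complex.I * α) ^ 2
        - a ^ 2 * β ^ 2 - b ^ 2 * α ^ 2 = 0 := by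
      apply mul_left_cancel₀ hc
      rw [mul_zero, hcdef]
      linear_combination q3 + (((Real.tanh r : ℂ)) ^ 2 * (Complex.exp (-(Complex.I * θ))) ^ 2 *
        b ^ 2 * α ^ 2 * (Complex.I ^ 2 - 1)) * Complex.I_sq
    have hB : a * b * α * β = 1 / 6 := by
      linear_combination (-(1:ℂ)/12) * Q1 + (-(1:ℂ)/12) * Q2 +
        ((a * α + b * β + 1) / 6) * hC
    have hA : a ^ 2 * α * β = a * b * β ^ 2 := by
      linear_combination ((-(1:ℂ) + Complex.I)/8) * Q1 + ((1 + Complex.I)/8) * Q2 +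
        (Complex.I/4) * Q3 +
        ((-(1:ℂ)/4) * b^2 * α^2 * Complex.I^3 - (1/2) * a * b * α^2 * Complex.I^2 +
          (1/2) * b^2 * α * β * Complex.I^2 - (1/4) * a^2 * α^2 * Complex.I +
          a * b * α * β * Complex.I - (1/4) * b^2 * β^2 * Complex.I +
          (1/4) * b^2 * α^2 * Complex.I + (1/2) * a^2 * α * β - (1/2) * a * b * β^2 +
          (1/2) * a * b * α^2 - (1/2) * b^2 * α * β) * Complex.I_sq
    have hfrac : a * α = b * β := by
      linear_combination 6 * (b * α) * hA + 6 * (b * β - a * α) * hB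
    have hhalf : a * α = 1 / 2 := by
      linear_combination (1/2 : ℂ) * hC + (1/2 : ℂ) * hfrac
    have hbb : b * β = 1 / 2 := by linear_combination hC - hhalf
    have : (1 : ℂ) / 6 = 1 / 4 := by
      linear_combination -hB + (b * β) * hhalf + (1/2 : ℂ) * hbb
    norm_num at this
  obtain ⟨g, g', hw⟩ := hQ
  set w := E g g' - E g 0 - E 0 g' with hwdef
  have hall : ∀ s : ℝ, ∃ n : ℤ, (s : ℂ) ^ 4 * w = n * (2 * Real.pi * Complex.I) := by
    intro s
    have hk := key ((s : ℂ) * g) ((s : ℂ) * g')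
    have e1 := hscale s g g'
    have e2 := hscale s g 0
    have e3 := hscale s 0 g'
    rw [mul_zero] at e2 e3
    rw [e1, e2, e3] at hk
    have : Complex.exp ((s : ℂ) ^ 4 * w) = 1 := by
      rw [hwdef]; rw [show (s:ℂ)^4 * (E g g' - E g 0 - E 0 g') =
        (s:ℂ)^4 * E g g' - (s:ℂ)^4 * E g 0 - (s:ℂ)^4 * E 0 g' by ring]
      exact hk
    rwa [Complex.exp_eq_one_iff] at this
  set u : ℝ := Real.pi / ‖w‖ with hu
  have hwabs : 0 < ‖w‖ := norm_pos_iff.mpr hw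
  have hupos : 0 < u := div_pos Real.pi_pos hwabs
  set s : ℝ := Real.sqrt (Real.sqrt u) with hs
  have hs4 : s ^ 4 = u := by
    rw [hs, show (4:ℕ) = 2 * 2 by norm_num, pow_mul, Real.sq_sqrt (Real.sqrt_nonneg u),
      Real.sq_sqrt hupos.le]
  obtain ⟨n, hn⟩ := hall s
  have habs : ‖(s : ℂ) ^ 4 * w‖ = Real.pi := by
    rw [norm_mul, norm_pow, Complex.norm_real, Real.norm_eq_abs, _root_.abs_of_nonneg (Real.sqrt_nonneg _), hs4, hu]
    field_simp
  rw [hn] at habs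
  have habs2 : |(n : ℝ)| * (2 * Real.pi) = Real.pi := by
    rw [norm_mul, norm_mul, norm_mul, Complex.norm_intCast, Complex.norm_two, Complex.norm_I,
      Complex.norm_real, Real.norm_eq_abs, abs_of_pos Real.pi_pos, mul_one] at habs
    linarith [habs]
  rcases eq_or_ne n 0 with hn0 | hn0
  · rw [hn0] at habs2
    simp at habs2
    linarith [Real.pi_pos]
  · have h1 : (1 : ℝ) ≤ |(n : ℝ)| := by
      rw [← Int.cast_abs]
      exact_mod_cast Int.one_le_abs hn0
    nlinarith [Real.pi_pos]
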